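/- For 0 < μ < λ < 1, the quartic plane curve R(x,y) = 0, where R(x,y) = (1/5)y^4 − (1/6)y^2 P'''(x) + P'(x) and P' = x(x−μ)(x−λ)(x−1), contains no critical points of R; equivalently, R does not vanish at any solution of R_x = R_y = 0. -/

import Mathlib

private lemma stmt13_sgn0 (lam mu : ℝ) (hmu : 0 < mu) (hml : mu < lam) :
    4*(0:ℝ)^3 - 3*(1+lam+mu)*0^2 + 2*(lam+mu+lam*mu)*0 - lam*mu < 0 := by
  nlinarith [mul_pos (hmu.trans hml) hmu]

private lemma stmt13_sgnmu (lam mu : ℝ) (hmu : 0 < mu) (hml : mu < lam) (hlam : lam < 1) :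
    0 < 4*mu^3 - 3*(1+lam+mu)*mu^2 + 2*(lam+mu+lam*mu)*mu - lam*mu := by
  nlinarith [mul_pos hmu (mul_pos_of_neg_of_neg
    (show mu - lam < 0 by linarith) (show mu - 1 < 0 by linarith))]

private lemma stmt13_sgnlam (lam mu : ℝ) (hmu : 0 < mu) (hml : mu < lam) (hlam : lam < 1) :
    4*lam^3 - 3*(1+lam+mu)*lam^2 + 2*(lam+mu+lam*mu)*lam - lam*mu < 0 := by
  nlinarith [mul_neg_of_pos_of_neg (mul_pos (hmu.trans hml)
    (show 0 < lam - mu by linarith)) (show lam - 1 < 0 by linarith)]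

private lemma stmt13_sgn1 (lam mu : ℝ) (hmu : 0 < mu) (hml : mu < lam) (hlam : lam < 1) :
    0 < 4*(1:ℝ)^3 - 3*(1+lam+mu)*1^2 + 2*(lam+mu+lam*mu)*1 - lam*mu := by
  nlinarith [mul_pos (show 0 < 1 - mu by linarith) (show 0 < 1 - lam by linarith)]

private lemma stmt13_Apos (lam mu : ℝ) (hmu : 0 < mu) (hml : mu < lam) (hlam : lam < 1) :
    0 < 3*(1+lam+mu)^2/8 - (lam+mu+lam*mu) := by
  nlinarith [sq_nonneg (lam-mu), sq_nonneg (lam-1/2), sq_nonneg (mu-1/2)]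

private lemma stmt13_disc (A B al be ga : ℝ) (hga : ga = -al - be)
    (hAeq : A = 2*(al^2 + al*be + be^2)) (hBeq : B = -4*al*be*ga) :
    27*B^2 ≤ 8*A^3 := by
  have hkey : 8*A^3 - 27*B^2 = 16*((al-be)*(be-ga)*(ga-al))^2 := by
    rw [hAeq, hBeq, hga]; ring
  nlinarith [sq_nonneg ((al-be)*(be-ga)*(ga-al))]

private lemma stmt13_final (A B t : ℝ) (hApos : 0 < A) (hdisc : 27*B^2 ≤ 8*A^3)
    (hcube : 48*t^3 - 4*A*t - 3*B = 0) (huA : A < 12*t^2 - A) : False := by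
  have hupos : 0 < 12*t^2 - A := hApos.trans huA
  have h3B : 3*B = 4*t*(12*t^2 - A) := by linear_combination (-1)*hcube
  have h27 : 27*B^2 = (4*(12*t^2-A) + 4*A)*(12*t^2-A)^2 := by
    linear_combination (3*(3*B + 4*t*(12*t^2-A))) * h3B
  nlinarith [hdisc, h27, hApos, huA, hupos,
    mul_pos (show (0:ℝ) < 12*t^2 - A - A by linarith) (mul_pos hupos hupos),
    mul_pos (mul_pos hApos (show (0:ℝ) < 12*t^2 - A - A by linarith))
      (show (0:ℝ) < 12*t^2 - A + A by linarith)]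

/-- For `0 < μ < λ < 1`, the quartic curve `R(x,y) = 0`, where
`R(x,y) = (1/5)y⁴ − (1/6)y²P'''(x) + P'(x)` and `P'(x) = x(x−μ)(x−λ)(x−1)`, contains no
critical point of `R`: `R` does not vanish at any solution of `R_x = R_y = 0`. -/
theorem stmt13 (lam mu : ℝ) (hmu : 0 < mu) (hml : mu < lam) (hlam : lam < 1)
    (p1 p2 p3 : ℝ → ℝ)
    (hp1 : ∀ x, p1 x = x * (x - mu) * (x - lam) * (x - 1))
    (hp2 : p2 = deriv p1) (hp3 : p3 = deriv p2)
    (R : ℝ → ℝ → ℝ)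
    (hR : ∀ x y, R x y = (1 / 5) * y ^ 4 - (1 / 6) * y ^ 2 * p3 x + p1 x) :
    ∀ x y : ℝ, deriv (fun x' => R x' y) x = 0 → deriv (fun y' => R x y') y = 0 →
      R x y ≠ 0 := by
  intro x y hx hy hcon
  have hlam0 : 0 < lam := hmu.trans hml
  -- explicit derivatives
  have hder1 : ∀ z : ℝ, HasDerivAt p1
      (4*z^3 - 3*(1+lam+mu)*z^2 + 2*(lam+mu+lam*mu)*z - lam*mu) z := by
    intro z
    have hfun : p1 = fun z : ℝ => z*(z-mu)*(z-lam)*(z-1) := funext hp1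
    rw [hfun]
    have h := (((hasDerivAt_id z).mul ((hasDerivAt_id z).sub_const mu)).mul
        ((hasDerivAt_id z).sub_const lam)).mul ((hasDerivAt_id z).sub_const 1)
    simp only [id_eq] at h
    refine h.congr_deriv ?_
    simp only [Pi.mul_apply, id_eq]
    ring
  have hp2x : ∀ z : ℝ, p2 z = 4*z^3 - 3*(1+lam+mu)*z^2 + 2*(lam+mu+lam*mu)*z - lam*mu := by
    intro z; rw [hp2]; exact (hder1 z).deriv
  have hder2 : ∀ z : ℝ, HasDerivAt p2
      (12*z^2 - 6*(1+lam+mu)*z + 2*(lam+mu+lam*mu)) z := by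
    intro z
    have hfun : p2 = fun z : ℝ => 4*z^3 - 3*(1+lam+mu)*z^2 + 2*(lam+mu+lam*mu)*z - lam*mu :=
      funext hp2x
    rw [hfun]
    have h := ((((hasDerivAt_pow 3 z).const_mul (4:ℝ)).sub
        ((hasDerivAt_pow 2 z).const_mul (3*(1+lam+mu)))).add
        ((hasDerivAt_id z).const_mul (2*(lam+mu+lam*mu)))).sub_const (lam*mu)
    simp only [id_eq] at h
    refine h.congr_deriv ?_
    push_cast
    ring
  have hp3x : ∀ z : ℝ, p3 z = 12*z^2 - 6*(1+lam+mu)*z + 2*(lam+mu+lam*mu) := by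
    intro z; rw [hp3]; exact (hder2 z).deriv
  have hder3 : ∀ z : ℝ, HasDerivAt p3 (24*z - 6*(1+lam+mu)) z := by
    intro z
    have hfun : p3 = fun z : ℝ => 12*z^2 - 6*(1+lam+mu)*z + 2*(lam+mu+lam*mu) :=
      funext hp3x
    rw [hfun]
    have h := (((hasDerivAt_pow 2 z).const_mul (12:ℝ)).sub
        ((hasDerivAt_id z).const_mul (6*(1+lam+mu)))).add_const (2*(lam+mu+lam*mu))
    simp only [id_eq] at h
    refine h.congr_deriv ?_
    push_cast
    ring
  -- the two derivative equations
  have hdRx : HasDerivAt (fun x' => R x' y)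
      (4*x^3 - 3*(1+lam+mu)*x^2 + 2*(lam+mu+lam*mu)*x - lam*mu
        - 1/6*y^2*(24*x - 6*(1+lam+mu))) x := by
    have hfun : (fun x' => R x' y)
        = fun x' => 1 / 5 * y ^ 4 - 1 / 6 * y ^ 2 * p3 x' + p1 x' :=
      funext fun x' => hR x' y
    rw [hfun]
    have h := ((hasDerivAt_const x (1 / 5 * y ^ 4)).sub
        ((hder3 x).const_mul (1 / 6 * y ^ 2))).add (hder1 x)
    refine h.congr_deriv ?_
    ring
  have e1 : 4*x^3 - 3*(1+lam+mu)*x^2 + 2*(lam+mu+lam*mu)*x - lam*mu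
      - 1/6*y^2*(24*x - 6*(1+lam+mu)) = 0 := by
    rw [← hdRx.deriv]; exact hx
  have hdRy : HasDerivAt (fun y' => R x y') (4/5*y^3 - 1/3*y*p3 x) y := by
    have hfun : (fun y' => R x y')
        = fun y' => 1 / 5 * y' ^ 4 - 1 / 6 * y' ^ 2 * p3 x + p1 x :=
      funext fun y' => hR x y'
    rw [hfun]
    have h := (((hasDerivAt_pow 4 y).const_mul ((1:ℝ) / 5)).sub
        (((hasDerivAt_pow 2 y).const_mul ((1:ℝ) / 6)).mul_const (p3 x))).add_const (p1 x)
    refine h.congr_deriv ?_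
    push_cast
    ring
  have e2 : 4/5*y^3 - 1/3*y*p3 x = 0 := by rw [← hdRy.deriv]; exact hy
  have hRval : 1 / 5 * y ^ 4 - 1 / 6 * y ^ 2 * p3 x + p1 x = 0 := by
    rw [← hR]; exact hcon
  by_cases hy0 : y = 0
  · -- case y = 0 : critical point of p1 on the x-axis
    subst hy0
    have hp1x : x * (x - mu) * (x - lam) * (x - 1) = 0 := by
      rw [← hp1]; linear_combination hRval
    have e1' : 4*x^3 - 3*(1+lam+mu)*x^2 + 2*(lam+mu+lam*mu)*x - lam*mu = 0 := by
      linear_combination e1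
    rcases mul_eq_zero.mp hp1x with h | h
    · rcases mul_eq_zero.mp h with h | h
      · rcases mul_eq_zero.mp h with h | h
        · rw [h] at e1'
          linarith [stmt13_sgn0 lam mu hmu hml, e1']
        · have hxmu : x = mu := by linarith [sub_eq_zero.mp h]
          rw [hxmu] at e1'
          linarith [stmt13_sgnmu lam mu hmu hml hlam, e1']
      · have hxl : x = lam := by linarith [sub_eq_zero.mp h]
        rw [hxl] at e1'
        linarith [stmt13_sgnlam lam mu hmu hml hlam, e1']
    · have hx1 : x = 1 := by linarith [sub_eq_zero.mp h]
      rw [hx1] at e1'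
      linarith [stmt13_sgn1 lam mu hmu hml hlam, e1']
  · -- case y ≠ 0 : impossible, since no constrained point has P₃ > 0
    have hyy : 4/5*y^2 - 1/3*p3 x = 0 := by
      rcases mul_eq_zero.mp (show y * (4/5*y^2 - 1/3*p3 x) = 0 by linear_combination e2)
        with h | h
      · exact absurd h hy0
      · exact h
    have hy2sq : y^2 = 5/12 * p3 x := by linarith
    have hysqpos : 0 < y^2 := by positivity
    have hp3pos : 0 < p3 x := by linarith
    -- three real roots of p2 by the intermediate value theorem
    have hfun2 : p2 = fun z : ℝ => 4*z^3 - 3*(1+lam+mu)*z^2 + 2*(lam+mu+lam*mu)*z - lam*mu :=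
      funext hp2x
    have hcont : Continuous p2 := by rw [hfun2]; fun_prop
    have hv0 : p2 0 < 0 := by rw [hp2x]; exact stmt13_sgn0 lam mu hmu hml
    have hvmu : 0 < p2 mu := by rw [hp2x]; exact stmt13_sgnmu lam mu hmu hml hlam
    have hvlam : p2 lam < 0 := by rw [hp2x]; exact stmt13_sgnlam lam mu hmu hml hlam
    have hv1 : 0 < p2 1 := by rw [hp2x]; exact stmt13_sgn1 lam mu hmu hml hlam
    obtain ⟨a, haI, ha0⟩ := intermediate_value_Ioo (le_of_lt hmu) hcont.continuousOn
      (Set.mem_Ioo.mpr ⟨hv0, hvmu⟩)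
    obtain ⟨b, hbI, hb0⟩ := intermediate_value_Ioo' (le_of_lt hml) hcont.continuousOn
      (Set.mem_Ioo.mpr ⟨hvlam, hvmu⟩)
    obtain ⟨c, hcI, hc0⟩ := intermediate_value_Ioo (le_of_lt hlam) hcont.continuousOn
      (Set.mem_Ioo.mpr ⟨hvlam, hv1⟩)
    have hab : a < b := lt_trans haI.2 hbI.1
    have hbc : b < c := lt_trans hbI.2 hcI.1
    have hac : a < c := hab.trans hbc
    have haq : 4*a^3 - 3*(1+lam+mu)*a^2 + 2*(lam+mu+lam*mu)*a - lam*mu = 0 :=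
      (hp2x a).symm.trans ha0
    have hbq : 4*b^3 - 3*(1+lam+mu)*b^2 + 2*(lam+mu+lam*mu)*b - lam*mu = 0 :=
      (hp2x b).symm.trans hb0
    have hcq : 4*c^3 - 3*(1+lam+mu)*c^2 + 2*(lam+mu+lam*mu)*c - lam*mu = 0 :=
      (hp2x c).symm.trans hc0
    have e_ab : 4*(a^2+a*b+b^2) - 3*(1+lam+mu)*(a+b) + 2*(lam+mu+lam*mu) = 0 := by
      rcases mul_eq_zero.mp (show (a-b) *
          (4*(a^2+a*b+b^2) - 3*(1+lam+mu)*(a+b) + 2*(lam+mu+lam*mu)) = 0 by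
        linear_combination haq - hbq) with h | h
      · exact absurd h (sub_ne_zero.mpr (ne_of_lt hab))
      · exact h
    have e_bc : 4*(b^2+b*c+c^2) - 3*(1+lam+mu)*(b+c) + 2*(lam+mu+lam*mu) = 0 := by
      rcases mul_eq_zero.mp (show (b-c) *
          (4*(b^2+b*c+c^2) - 3*(1+lam+mu)*(b+c) + 2*(lam+mu+lam*mu)) = 0 by
        linear_combination hbq - hcq) with h | h
      · exact absurd h (sub_ne_zero.mpr (ne_of_lt hbc))
      · exact h
    have hsum : 4*(a+b+c) = 3*(1+lam+mu) := by
      rcases mul_eq_zero.mp (show (a-c) * (4*(a+b+c) - 3*(1+lam+mu)) = 0 by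
        linear_combination e_ab - e_bc) with h | h
      · exact absurd h (sub_ne_zero.mpr (ne_of_lt hac))
      · linarith [h]
    -- shifted variables
    set t := x - (1+lam+mu)/4 with htdef
    set A := 3*(1+lam+mu)^2/8 - (lam+mu+lam*mu) with hAdef
    set B := -(1+lam+mu)^3/8 + (lam+mu+lam*mu)*(1+lam+mu)/2 - lam*mu with hBdef
    set al := a - (1+lam+mu)/4 with haldef
    set be := b - (1+lam+mu)/4 with hbedef
    set ga := c - (1+lam+mu)/4 with hgadef
    have hga : ga = -al - be := by rw [hgadef, haldef, hbedef]; linarith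
    have hAeq : A = 2*(al^2 + al*be + be^2) := by
      rw [hAdef, haldef, hbedef]; linear_combination (-(1/2))*e_ab
    have hshift : 4*al^3 - 2*A*al + B = 0 := by
      rw [haldef, hAdef, hBdef]; linear_combination haq
    have hBeq : B = -4*al*be*ga := by
      rw [hga]; linear_combination hshift + (2*al)*hAeq
    have hdisc : 27*B^2 ≤ 8*A^3 := stmt13_disc A B al be ga hga hAeq hBeq
    have hApos : 0 < A := by rw [hAdef]; exact stmt13_Apos lam mu hmu hml hlam
    have hP3t : p3 x = 12*t^2 - 2*A := by rw [hp3x x, htdef, hAdef]; ring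
    have hy2' : y^2 = 5/12 * (12*x^2 - 6*(1+lam+mu)*x + 2*(lam+mu+lam*mu)) := by
      rw [hy2sq, hp3x]
    have hcube : 48*t^3 - 4*A*t - 3*B = 0 := by
      rw [htdef, hAdef, hBdef]
      linear_combination (-3)*e1 - (1/2)*(24*x - 6*(1+lam+mu))*hy2'
    have huA : A < 12*t^2 - A := by linarith [hP3t, hp3pos]
    exact stmt13_final A B t hApos hdisc hcube huA
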